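/- Let G be a group, H ≤ G a subgroup of finite index, and g ∈ G with HgH ≠ Hg⁻¹H. Let S be a finite multiset of elements of the double coset HgH such that every right coset of H contained in HgH contains exactly two elements of S and every left coset of H contained in HgH contains exactly two elements of S. Then S can be partitioned into two multisets A and B such that the multiset A ∪ B⁻¹ (where B⁻¹ is the multiset of inverses of elements of B) is diagonal with respect to H, i.e. no two of its elements lie in the same left coset of H and no two lie in the same right coset of H. -/

import Mathlib

open scoped Classical

section Defs

variable {G : Type*} [Group G]

/-- A single Nielsen move on a finite multiset of group elements: replace one
occurrence of `g` by `g⁻¹`, or by `h * g` or `g * h` where `h` is another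
occurrence in the multiset. -/
def NielsenMove (S T : Multiset G) : Prop :=
  (∃ g ∈ S, T = g⁻¹ ::ₘ S.erase g) ∨
    (∃ g ∈ S, ∃ h ∈ S.erase g, T = h * g ::ₘ S.erase g ∨ T = g * h ::ₘ S.erase g)

/-- Nielsen equivalence: one multiset is obtained from the other by a finite
sequence of Nielsen moves. -/
def NielsenEquiv (S T : Multiset G) : Prop :=
  Relation.ReflTransGen NielsenMove S T

/-- The elements of the multiset `S` lie in pairwise distinct left cosets of `H`. -/
def LeftDistinct (H : Subgroup G) (S : Multiset G) : Prop :=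
  (S.map fun x => ((x : G) : G ⧸ H)).Nodup

/-- The elements of the multiset `S` lie in pairwise distinct right cosets of `H`
(using that `Hx = Hy ↔ x⁻¹H = y⁻¹H`). -/
def RightDistinct (H : Subgroup G) (S : Multiset G) : Prop :=
  (S.map fun x => ((x⁻¹ : G) : G ⧸ H)).Nodup

/-- `T` is a left transversal of `H`: it contains exactly one element of each
left coset of `H`. -/
def IsLeftTransversal (H : Subgroup G) (T : Set G) : Prop :=
  ∀ g : G, ∃! t, t ∈ T ∧ ((t : G) : G ⧸ H) = ((g : G) : G ⧸ H)

/-- `T` is a right transversal of `H`: it contains exactly one element of each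
right coset of `H` (using that `Hx = Hy ↔ x⁻¹H = y⁻¹H`). -/
def IsRightTransversal (H : Subgroup G) (T : Set G) : Prop :=
  ∀ g : G, ∃! t, t ∈ T ∧ ((t⁻¹ : G) : G ⧸ H) = ((g⁻¹ : G) : G ⧸ H)

/-- The left coset `aH` as a set. -/
def lcoset (a : G) (H : Subgroup G) : Set G := {x | a⁻¹ * x ∈ H}

/-- The right coset `Ha` as a set. -/
def rcoset (H : Subgroup G) (a : G) : Set G := {x | x * a⁻¹ ∈ H}

/-- The double coset `HgH` as a set. -/
def dcoset (H : Subgroup G) (g : G) : Set G := {x | ∃ h₁ ∈ H, ∃ h₂ ∈ H, x = h₁ * g * h₂}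

/-- `S` is left-right clean relative to `H`: `S ∖ H` is nonempty and its elements
lie in pairwise distinct left cosets and pairwise distinct right cosets of `H`. -/
def LeftRightClean (H : Subgroup G) (S : Multiset G) : Prop :=
  (∃ x ∈ S, x ∉ H) ∧
    LeftDistinct H (S.filter fun x => x ∉ H) ∧
    RightDistinct H (S.filter fun x => x ∉ H)

end Defs

section DC
variable {G : Type*} [Group G]

private lemma dcoset_mul_mem (H : Subgroup G) {u x h : G}
    (hx : x ∈ dcoset H u) (hh : h ∈ H) : x * h ∈ dcoset H u := by
  obtain ⟨h₁, hh₁, h₂, hh₂, rfl⟩ := hx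
  exact ⟨h₁, hh₁, h₂ * h, H.mul_mem hh₂ hh, by group⟩

private lemma dcoset_inv_mem (H : Subgroup G) {u x : G}
    (hx : x ∈ dcoset H u) : x⁻¹ ∈ dcoset H u⁻¹ := by
  obtain ⟨h₁, hh₁, h₂, hh₂, rfl⟩ := hx
  exact ⟨h₂⁻¹, H.inv_mem hh₂, h₁⁻¹, H.inv_mem hh₁, by group⟩

private lemma dcoset_eq_of_mem (H : Subgroup G) {u x : G}
    (hx : x ∈ dcoset H u) : dcoset H x = dcoset H u := by
  obtain ⟨h₁, hh₁, h₂, hh₂, rfl⟩ := hx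
  ext z
  constructor
  · rintro ⟨k₁, hk₁, k₂, hk₂, rfl⟩
    exact ⟨k₁ * h₁, H.mul_mem hk₁ hh₁, h₂ * k₂, H.mul_mem hh₂ hk₂, by group⟩
  · rintro ⟨k₁, hk₁, k₂, hk₂, rfl⟩
    exact ⟨k₁ * h₁⁻¹, H.mul_mem hk₁ (H.inv_mem hh₁), h₂⁻¹ * k₂,
      H.mul_mem (H.inv_mem hh₂) hk₂, by group⟩

end DC

section Coloring
variable {n : ℕ}

private lemma key_no_odd (σ τ : Equiv.Perm (Fin n))
    (hσ2 : σ * σ = 1) (hτ2 : τ * τ = 1)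
    (hσ : ∀ x, σ x ≠ x) (hτ : ∀ x, τ x ≠ x) (k : ℤ) (x : Fin n) :
    ((σ * τ) ^ k * σ) x ≠ x := by
  set π := σ * τ with hπ
  have hσinv : σ⁻¹ = σ := by rw [inv_eq_iff_mul_eq_one, hσ2]
  have hτinv : τ⁻¹ = τ := by rw [inv_eq_iff_mul_eq_one, hτ2]
  have hconj : σ * π * σ = π⁻¹ := by
    rw [hπ, mul_inv_rev, hσinv, hτinv, ← mul_assoc, hσ2, one_mul]
  have hconjπ : (MulAut.conj σ) π = π⁻¹ := by
    rw [MulAut.conj_apply, hσinv, ← mul_assoc]; exact hconj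
  have hswap : ∀ m : ℤ, σ * π ^ m = π ^ (-m) * σ := by
    intro m
    have h := map_zpow (MulAut.conj σ) π m
    rw [hconjπ, inv_zpow, ← zpow_neg, MulAut.conj_apply, hσinv] at h
    calc σ * π ^ m = σ * π ^ m * σ * σ := by rw [mul_assoc, hσ2, mul_one]
      _ = π ^ (-m) * σ := by rw [mul_assoc, ← mul_assoc, h]
  have hswapx : ∀ (m : ℤ) (z : Fin n), σ ((π ^ m) z) = (π ^ (-m)) (σ z) := by
    intro m z
    rw [← Equiv.Perm.mul_apply, hswap m, Equiv.Perm.mul_apply]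
  intro hfix
  have hfix' : (π ^ k) (σ x) = x := by
    rw [← Equiv.Perm.mul_apply]; exact hfix
  have hx : σ x = (π ^ (-k)) x := by
    have := congrArg (π ^ (-k) : Equiv.Perm (Fin n)) hfix'
    rwa [← Equiv.Perm.mul_apply, ← zpow_add, neg_add_cancel, zpow_zero,
      Equiv.Perm.one_apply] at this
  have comp : ∀ (a b : ℤ), (π ^ a) ((π ^ b) x) = (π ^ (a + b)) x := by
    intro a b; rw [← Equiv.Perm.mul_apply, ← zpow_add]
  rcases Int.even_or_odd k with ⟨m, hm⟩ | ⟨m, hm⟩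
  · have : σ ((π ^ (-m)) x) = (π ^ (-m)) x := by
      rw [hswapx (-m) x, neg_neg, hx, comp, show m + -k = -m by omega]
    exact hσ _ this
  · have e1 : σ ((π ^ (-m)) x) = (π ^ (-m - 1)) x := by
      rw [hswapx (-m) x, neg_neg, hx, comp, show m + -k = -m - 1 by omega]
    have hτσ : ∀ z, τ z = σ (π z) := by
      intro z
      have : σ * π = τ := by rw [hπ, ← mul_assoc, hσ2, one_mul]
      rw [← this, Equiv.Perm.mul_apply]
    have : τ ((π ^ (-m - 1)) x) = (π ^ (-m - 1)) x := by
      rw [hτσ, show π ((π ^ (-m - 1)) x) = (π ^ (1 : ℤ)) ((π ^ (-m-1)) x) by rw [zpow_one],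
        comp, show (1 : ℤ) + (-m - 1) = -m by ring, e1]
    exact hτ _ this

end Coloring

section Coloring2
variable {n : ℕ}

private noncomputable def relOrb (π σ : Equiv.Perm (Fin n)) (x : Fin n) : Finset (Fin n) :=
  Finset.univ.filter fun y => π.SameCycle x y ∨ π.SameCycle (σ x) y

private lemma mem_relOrb (π σ : Equiv.Perm (Fin n)) (x y : Fin n) :
    y ∈ relOrb π σ x ↔ (π.SameCycle x y ∨ π.SameCycle (σ x) y) := by
  simp [relOrb]

private lemma relOrb_nonempty (π σ : Equiv.Perm (Fin n)) (x : Fin n) :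
    (relOrb π σ x).Nonempty :=
  ⟨x, (mem_relOrb π σ x x).2 (Or.inl (Equiv.Perm.SameCycle.refl π x))⟩

private noncomputable def repF (π σ : Equiv.Perm (Fin n)) (x : Fin n) : Fin n :=
  (relOrb π σ x).min' (relOrb_nonempty π σ x)

private lemma repF_mem (π σ : Equiv.Perm (Fin n)) (x : Fin n) :
    π.SameCycle x (repF π σ x) ∨ π.SameCycle (σ x) (repF π σ x) :=
  (mem_relOrb π σ x _).1 ((relOrb π σ x).min'_mem (relOrb_nonempty π σ x))

private lemma repF_congr (π σ : Equiv.Perm (Fin n)) {x y : Fin n}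
    (h : ∀ z, (π.SameCycle x z ∨ π.SameCycle (σ x) z) ↔
      (π.SameCycle y z ∨ π.SameCycle (σ y) z)) : repF π σ x = repF π σ y := by
  have : relOrb π σ x = relOrb π σ y :=
    Finset.filter_congr fun z _ => h z
  simp only [repF]
  congr 1

private lemma exists_two_coloring (σ τ : Equiv.Perm (Fin n))
    (hσ2 : σ * σ = 1) (hτ2 : τ * τ = 1)
    (hσ : ∀ x, σ x ≠ x) (hτ : ∀ x, τ x ≠ x) :
    ∃ c : Fin n → Prop, ∀ x, ¬(c (σ x) ↔ c x) ∧ ¬(c (τ x) ↔ c x) := by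
  set π := σ * τ with hπ
  have hσinv : σ⁻¹ = σ := by rw [inv_eq_iff_mul_eq_one, hσ2]
  have hτinv : τ⁻¹ = τ := by rw [inv_eq_iff_mul_eq_one, hτ2]
  have hσσ : ∀ z, σ (σ z) = z := fun z => by
    rw [← Equiv.Perm.mul_apply, hσ2, Equiv.Perm.one_apply]
  have hτσ : ∀ z, τ z = σ (π z) := by
    intro z
    have h : σ * π = τ := by rw [hπ, ← mul_assoc, hσ2, one_mul]
    rw [← h, Equiv.Perm.mul_apply]
  have hconj : σ * π * σ = π⁻¹ := by
    rw [hπ, mul_inv_rev, hσinv, hτinv, ← mul_assoc, hσ2, one_mul]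
  have hswap1 : ∀ z, σ (π z) = π⁻¹ (σ z) := by
    intro z
    have h : σ * π = π⁻¹ * σ := by
      calc σ * π = σ * π * σ * σ := by rw [mul_assoc, hσ2, mul_one]
        _ = π⁻¹ * σ := by rw [hconj]
    rw [← Equiv.Perm.mul_apply, h, Equiv.Perm.mul_apply]
  -- no odd word fixes a point
  have noBoth : ∀ r x : Fin n, π.SameCycle r x → π.SameCycle r (σ x) → False := by
    rintro r x ⟨a, ha⟩ ⟨b, hb⟩
    have hra : r = (π ^ (-a)) x := by
      rw [← ha, ← Equiv.Perm.mul_apply, ← zpow_add, neg_add_cancel, zpow_zero,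
        Equiv.Perm.one_apply]
    have : (π ^ (b - a)) x = σ x := by
      rw [← hb, hra, ← Equiv.Perm.mul_apply, ← zpow_add]
      ring_nf
    have hfix : ((σ * τ) ^ (a - b) * σ) x = x := by
      rw [Equiv.Perm.mul_apply, ← hπ, ← this, ← Equiv.Perm.mul_apply, ← zpow_add]
      have : a - b + (b - a) = 0 := by ring
      rw [this, zpow_zero, Equiv.Perm.one_apply]
    exact key_no_odd σ τ hσ2 hτ2 hσ hτ (a - b) x hfix
  -- the coloring
  refine ⟨fun x => π.SameCycle (repF π σ x) x, fun x => ?_⟩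
  have hrepσ : repF π σ (σ x) = repF π σ x := by
    apply repF_congr
    intro z
    rw [hσσ x]
    exact or_comm
  have hrepτ : repF π σ (τ x) = repF π σ x := by
    apply repF_congr
    intro z
    have h1 : τ x = π⁻¹ (σ x) := by rw [hτσ x, hswap1 x]
    have h2 : σ (τ x) = π x := by rw [hτσ x, hσσ]
    rw [h2, h1, Equiv.Perm.inv_def, Equiv.Perm.sameCycle_symm_apply_left, Equiv.Perm.sameCycle_apply_left]
    exact or_comm
  set r := repF π σ x with hr
  have habx : ¬(π.SameCycle r (σ x) ↔ π.SameCycle r x) := by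
    by_cases h : π.SameCycle r x
    · simp only [h, iff_true]
      exact fun h' => noBoth r x h h'
    · simp only [h, iff_false, not_not]
      rcases repF_mem π σ x with h1 | h1
      · exact absurd h1.symm h
      · exact h1.symm
  constructor
  · show ¬(π.SameCycle (repF π σ (σ x)) (σ x) ↔ π.SameCycle (repF π σ x) x)
    rw [hrepσ, ← hr]
    exact habx
  · show ¬(π.SameCycle (repF π σ (τ x)) (τ x) ↔ π.SameCycle (repF π σ x) x)
    rw [hrepτ, ← hr]
    have : π.SameCycle r (τ x) ↔ π.SameCycle r (σ x) := by
      rw [show τ x = π⁻¹ (σ x) by rw [hτσ x, hswap1 x],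
        Equiv.Perm.inv_def, Equiv.Perm.sameCycle_symm_apply_right]
    rw [this]
    exact habx

end Coloring2

section Split
variable {n : ℕ}

private lemma pair_fun {κ : Type*} (v : Fin n → κ)
    (h : ∀ i, (Finset.univ.filter fun j => v j = v i).card = 2) :
    ∃ s : Fin n → Fin n, (∀ i, s i ≠ i) ∧ (∀ i, s (s i) = i) ∧ (∀ i, v (s i) = v i) ∧
      ∀ i j, j ≠ i → v j = v i → j = s i := by
  have hmem : ∀ i, i ∈ Finset.univ.filter fun j => v j = v i := by
    intro i; simp
  have h1 : ∀ i : Fin n, ∃ a, (Finset.univ.filter fun j => v j = v i).erase i = {a} := by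
    intro i
    rw [← Finset.card_eq_one, Finset.card_erase_of_mem (hmem i), h i]
  choose s hs using h1
  have hsmem : ∀ i, s i ∈ (Finset.univ.filter fun j => v j = v i).erase i := by
    intro i; rw [hs i]; exact Finset.mem_singleton_self _
  have hne : ∀ i, s i ≠ i := fun i => Finset.ne_of_mem_erase (hsmem i)
  have hv : ∀ i, v (s i) = v i := by
    intro i
    have := Finset.mem_of_mem_erase (hsmem i)
    simpa using this
  have huniq : ∀ i j, j ≠ i → v j = v i → j = s i := by
    intro i j hji hvji
    have : j ∈ (Finset.univ.filter fun k => v k = v i).erase i := by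
      rw [Finset.mem_erase, Finset.mem_filter]
      exact ⟨hji, Finset.mem_univ _, hvji⟩
    rw [hs i, Finset.mem_singleton] at this
    exact this
  refine ⟨s, hne, fun i => ?_, hv, huniq⟩
  have hFeq : (Finset.univ.filter fun j => v j = v (s i)) =
      (Finset.univ.filter fun j => v j = v i) := by
    apply Finset.filter_congr
    intro j _
    rw [hv i]
  have : i ∈ (Finset.univ.filter fun j => v j = v (s i)).erase (s i) := by
    rw [hFeq, Finset.mem_erase]
    exact ⟨(hne i).symm, hmem i⟩
  rw [hs (s i), Finset.mem_singleton] at this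
  exact this.symm

end Split

section MSplit

private lemma nodup_part {n : ℕ} {κ : Type*} (v : Fin n → κ) (s' : Fin n → Fin n)
    (huniq : ∀ i j, j ≠ i → v j = v i → j = s' i)
    (p : Fin n → Prop) [DecidablePred p] (hp : ∀ i, ¬ (p (s' i) ↔ p i)) :
    ((Multiset.filter p Finset.univ.val).map v).Nodup := by
  apply Multiset.Nodup.map_on
  · intro i hi j hj hvij
    rw [Multiset.mem_filter] at hi hj
    by_contra hne
    have hji : j = s' i := huniq i j (Ne.symm hne) hvij.symm
    exact hp i (by rw [← hji]; exact iff_of_true hj.2 hi.2)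
  · exact Multiset.Nodup.filter _ Finset.univ.nodup

private lemma multiset_split {α β γ : Type*} (S : Multiset α) (f : α → β) (g : α → γ)
    (hf : ∀ x ∈ S, (S.filter fun y => f y = f x).card = 2)
    (hg : ∀ x ∈ S, (S.filter fun y => g y = g x).card = 2) :
    ∃ A B : Multiset α, A + B = S ∧
      (A.map f).Nodup ∧ (A.map g).Nodup ∧ (B.map f).Nodup ∧ (B.map g).Nodup := by
  classical
  set l := S.toList with hl
  set n := l.length with hn
  set e : Fin n → α := l.get with he
  have hmemS : ∀ i : Fin n, e i ∈ S := by
    intro i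
    have : e i ∈ l := by
      have := List.get_mem l i
      simp only [he] at this ⊢
      exact this
    rwa [hl, Multiset.mem_toList] at this
  have hmapS : (Finset.univ.val.map e : Multiset α) = S := by
    have h1 : (Finset.univ.val : Multiset (Fin n)) = ↑(List.finRange n) := by
      rw [Fin.univ_def]
    rw [h1, Multiset.map_coe, he, List.map_get_finRange, hl, Multiset.coe_toList]
  have cardT : ∀ P : α → Prop, (Finset.univ.filter fun j => P (e j)).card = (S.filter P).card := by
    intro P
    rw [← hmapS, Multiset.filter_map, Multiset.card_map]
    rfl
  have hvf : ∀ i, (Finset.univ.filter fun j => f (e j) = f (e i)).card = 2 := fun i =>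
    (cardT fun y => f y = f (e i)).trans (hf (e i) (hmemS i))
  have hvg : ∀ i, (Finset.univ.filter fun j => g (e j) = g (e i)).card = 2 := fun i =>
    (cardT fun y => g y = g (e i)).trans (hg (e i) (hmemS i))
  obtain ⟨sf, hsf_ne, hsf_inv, hsf_v, hsf_u⟩ := pair_fun (fun j => f (e j)) hvf
  obtain ⟨sg, hsg_ne, hsg_inv, hsg_v, hsg_u⟩ := pair_fun (fun j => g (e j)) hvg
  let σ : Equiv.Perm (Fin n) := Function.Involutive.toPerm sf hsf_inv
  let τ : Equiv.Perm (Fin n) := Function.Involutive.toPerm sg hsg_inv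
  have hσapp : ∀ i, σ i = sf i := fun _ => rfl
  have hτapp : ∀ i, τ i = sg i := fun _ => rfl
  have hσ2 : σ * σ = 1 := by
    ext i
    simp [σ, Equiv.Perm.mul_apply, hsf_inv i]
    exact congrArg Fin.val (hsf_inv i)
  have hτ2 : τ * τ = 1 := by
    ext i
    simp [τ, Equiv.Perm.mul_apply, hsg_inv i]
    exact congrArg Fin.val (hsg_inv i)
  obtain ⟨c, hc⟩ := exists_two_coloring σ τ hσ2 hτ2
    (fun i => by rw [hσapp]; exact hsf_ne i) (fun i => by rw [hτapp]; exact hsg_ne i)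
  refine ⟨(Finset.univ.val.filter c).map e, (Finset.univ.val.filter fun i => ¬ c i).map e,
    ?_, ?_, ?_, ?_, ?_⟩
  · rw [← Multiset.map_add, Multiset.filter_add_not, hmapS]
  · rw [Multiset.map_map]
    exact nodup_part (f ∘ e) sf hsf_u c (fun i => by rw [← hσapp]; exact (hc i).1)
  · rw [Multiset.map_map]
    exact nodup_part (g ∘ e) sg hsg_u c (fun i => by rw [← hτapp]; exact (hc i).2)
  · rw [Multiset.map_map]
    refine nodup_part (f ∘ e) sf hsf_u (fun i => ¬ c i) (fun i => ?_)
    rw [not_iff_not]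
    rw [← hσapp]; exact (hc i).1
  · rw [Multiset.map_map]
    refine nodup_part (g ∘ e) sg hsg_u (fun i => ¬ c i) (fun i => ?_)
    rw [not_iff_not]
    rw [← hτapp]; exact (hc i).2

end MSplit


/-- if `HgH ≠ Hg⁻¹H` and `S` is a multiset in `HgH` such that
every right coset and every left coset of `H` contained in `HgH` contains
exactly two elements of `S`, then `S` splits as `A ∪ B` with `A ∪ B⁻¹` diagonal
with respect to `H`. -/
theorem stmt15 {G : Type*} [Group G] (H : Subgroup G) [H.FiniteIndex] (g : G)
    (hne : dcoset H g ≠ dcoset H g⁻¹)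
    (S : Multiset G) (hsub : ∀ x ∈ S, x ∈ dcoset H g)
    (hrow : ∀ a ∈ dcoset H g, (S.filter fun x => x ∈ rcoset H a).card = 2)
    (hcol : ∀ a ∈ dcoset H g, (S.filter fun x => x ∈ lcoset a H).card = 2) :
    ∃ A B : Multiset G, A + B = S ∧
      LeftDistinct H (A + B.map fun x => x⁻¹) ∧
      RightDistinct H (A + B.map fun x => x⁻¹) := by
  classical
  have hf : ∀ x ∈ S, Multiset.card
      (@Multiset.filter G (fun y => ((y : G) : G ⧸ H) = ((x : G) : G ⧸ H))
        (fun a => Classical.propDecidable _) S) = 2 := by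
    intro x hx
    have hiff : ∀ y : G, (((y : G) : G ⧸ H) = ((x : G) : G ⧸ H)) ↔ y ∈ lcoset x H := by
      intro y
      rw [QuotientGroup.eq]
      show y⁻¹ * x ∈ H ↔ x⁻¹ * y ∈ H
      constructor
      · intro h
        have := H.inv_mem h
        rwa [mul_inv_rev, inv_inv] at this
      · intro h
        have := H.inv_mem h
        rwa [mul_inv_rev, inv_inv] at this
    rw [@Multiset.filter_congr G (fun y => ((y : G) : G ⧸ H) = ((x : G) : G ⧸ H))
      (fun y => y ∈ lcoset x H) (fun a => Classical.propDecidable _)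
      (fun a => Classical.propDecidable _) S (fun y _ => hiff y)]
    exact hcol x (hsub x hx)
  have hg' : ∀ x ∈ S, Multiset.card
      (@Multiset.filter G (fun y => ((y⁻¹ : G) : G ⧸ H) = ((x⁻¹ : G) : G ⧸ H))
        (fun a => Classical.propDecidable _) S) = 2 := by
    intro x hx
    have hiff : ∀ y : G, (((y⁻¹ : G) : G ⧸ H) = ((x⁻¹ : G) : G ⧸ H)) ↔ y ∈ rcoset H x := by
      intro y
      rw [QuotientGroup.eq, inv_inv]
      exact Iff.rfl
    rw [@Multiset.filter_congr G (fun y => ((y⁻¹ : G) : G ⧸ H) = ((x⁻¹ : G) : G ⧸ H))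
      (fun y => y ∈ rcoset H x) (fun a => Classical.propDecidable _)
      (fun a => Classical.propDecidable _) S (fun y _ => hiff y)]
    exact hrow x (hsub x hx)
  obtain ⟨A, B, hAB, AL, AR, BL, BR⟩ :=
    multiset_split S (fun x => ((x : G) : G ⧸ H)) (fun x => ((x⁻¹ : G) : G ⧸ H))
      hf hg'
  have hAS : ∀ a ∈ A, a ∈ S := fun a ha => by
    rw [← hAB]; exact Multiset.mem_add.2 (Or.inl ha)
  have hBS : ∀ b ∈ B, b ∈ S := fun b hb => by
    rw [← hAB]; exact Multiset.mem_add.2 (Or.inr hb)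
  refine ⟨A, B, hAB, ?_, ?_⟩
  · unfold LeftDistinct
    rw [Multiset.map_add, Multiset.map_map, Multiset.nodup_add]
    refine ⟨AL, BR, ?_⟩
    rw [Multiset.disjoint_left]
    rintro q hqA hqB
    rw [Multiset.mem_map] at hqA hqB
    obtain ⟨a, ha, rfl⟩ := hqA
    obtain ⟨b, hb, hba⟩ := hqB
    have hab : a⁻¹ * b⁻¹ ∈ H := QuotientGroup.eq.1 hba.symm
    have hbinv1 : b⁻¹ ∈ dcoset H g := by
      have : a * (a⁻¹ * b⁻¹) ∈ dcoset H g :=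
        dcoset_mul_mem H (hsub a (hAS a ha)) hab
      simpa [mul_assoc] using this
    have hbinv2 : b⁻¹ ∈ dcoset H g⁻¹ := dcoset_inv_mem H (hsub b (hBS b hb))
    exact hne ((dcoset_eq_of_mem H hbinv1).symm.trans (dcoset_eq_of_mem H hbinv2))
  · unfold RightDistinct
    rw [Multiset.map_add, Multiset.map_map, Multiset.nodup_add]
    refine ⟨AR, ?_, ?_⟩
    · have : (Multiset.map ((fun x => ((x⁻¹ : G) : G ⧸ H)) ∘ fun x => x⁻¹) B) =
          Multiset.map (fun x => ((x : G) : G ⧸ H)) B := by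
        apply Multiset.map_congr rfl
        intro b _
        simp [Function.comp]
      rw [this]
      exact BL
    · rw [Multiset.disjoint_left]
      rintro q hqA hqB
      rw [Multiset.mem_map] at hqA hqB
      obtain ⟨a, ha, rfl⟩ := hqA
      obtain ⟨b, hb, hba⟩ := hqB
      have hab : a * b⁻¹⁻¹ ∈ H := by
        have := QuotientGroup.eq.1 hba.symm
        simpa using this
      have hb1 : b ∈ dcoset H g⁻¹ := by
        have h1 : a⁻¹ ∈ dcoset H g⁻¹ := dcoset_inv_mem H (hsub a (hAS a ha))
        have : a⁻¹ * (a * b) ∈ dcoset H g⁻¹ := dcoset_mul_mem H h1 (by simpa using hab)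
        simpa [mul_assoc] using this
      exact hne ((dcoset_eq_of_mem H (hsub b (hBS b hb))).symm.trans
        (dcoset_eq_of_mem H hb1))
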